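/- arXiv:1606.05317 — 3 statements merged into one kernel-verified Lean document; each statement's English description precedes it below -/
import Mathlib

section
/- Let (I_j)_{j≥0} be independent Bernoulli random variables with P(I_j = 1) = 1/(j+2), and τ_n = Σ_{j=0}^{n-1} I_j. Then τ_n / log n → 1 almost surely as n → ∞. -/
open MeasureTheory ProbabilityTheory Finset Filter


noncomputable def auxA (n : ℕ) : ℝ := ∑ j ∈ range n, 1 / ((j : ℝ) + 2)

lemma auxA_nonneg (n : ℕ) : 0 ≤ auxA n :=
  Finset.sum_nonneg fun j _ => by positivity

lemma auxA_mono : Monotone auxA := by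
  apply monotone_nat_of_le_succ
  intro n
  rw [auxA, auxA, Finset.sum_range_succ]
  have : (0:ℝ) ≤ 1 / ((n:ℝ) + 2) := by positivity
  linarith

lemma auxA_succ_le (n : ℕ) : auxA (n + 1) ≤ auxA n + 1 / 2 := by
  rw [auxA, auxA, Finset.sum_range_succ]
  have : (1:ℝ) / ((n:ℝ) + 2) ≤ 1 / 2 := by
    apply one_div_le_one_div_of_le <;> [norm_num; push_cast] <;> linarith [Nat.cast_nonneg (α := ℝ) n]
  linarith

lemma auxA_lower (n : ℕ) : Real.log (n + 2) - Real.log 2 ≤ auxA n := by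
  have key : ∀ j : ℕ, Real.log ((j:ℝ) + 3) - Real.log ((j:ℝ) + 2) ≤ 1 / ((j:ℝ) + 2) := by
    intro j
    have h2 : (0:ℝ) < (j:ℝ) + 2 := by positivity
    have h3 : (0:ℝ) < ((j:ℝ) + 3) / ((j:ℝ) + 2) := by positivity
    have := Real.log_le_sub_one_of_pos h3
    rw [Real.log_div (by linarith) (by linarith)] at this
    have : Real.log ((j:ℝ)+3) - Real.log ((j:ℝ)+2) ≤ ((j:ℝ)+3)/((j:ℝ)+2) - 1 := this
    have heq : ((j:ℝ)+3)/((j:ℝ)+2) - 1 = 1 / ((j:ℝ)+2) := by field_simp; norm_num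
    linarith [this, heq]
  have tel : ∑ j ∈ range n, (Real.log ((j:ℝ) + 1 + 2) - Real.log ((j:ℝ) + 2))
      = Real.log ((n:ℝ) + 2) - Real.log ((0:ℕ) + 2) := by
    have := Finset.sum_range_sub (f := fun i : ℕ => Real.log ((i:ℝ) + 2)) n
    simpa using this
  have : ∑ j ∈ range n, (Real.log ((j:ℝ) + 1 + 2) - Real.log ((j:ℝ) + 2)) ≤ auxA n := by
    apply Finset.sum_le_sum
    intro j _
    have := key j
    have h : (j:ℝ) + 1 + 2 = (j:ℝ) + 3 := by ring
    rw [h]; exact this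
  rw [tel] at this
  norm_num at this ⊢
  linarith

lemma auxA_upper (n : ℕ) : auxA n ≤ Real.log ((n:ℝ) + 1) := by
  have key : ∀ j : ℕ, 1 / ((j:ℝ) + 2) ≤ Real.log ((j:ℝ) + 2) - Real.log ((j:ℝ) + 1) := by
    intro j
    have h1 : (0:ℝ) < (j:ℝ) + 1 := by positivity
    have h2 : (0:ℝ) < (j:ℝ) + 2 := by positivity
    have h3 : (0:ℝ) < ((j:ℝ) + 1) / ((j:ℝ) + 2) := by positivity
    have := Real.log_le_sub_one_of_pos h3
    rw [Real.log_div (by linarith) (by linarith)] at this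
    have heq : ((j:ℝ)+1)/((j:ℝ)+2) - 1 = -(1 / ((j:ℝ)+2)) := by field_simp; ring
    linarith
  have tel : ∑ j ∈ range n, (Real.log ((j:ℝ) + 1 + 1) - Real.log ((j:ℝ) + 1))
      = Real.log ((n:ℝ) + 1) - Real.log ((0:ℕ) + 1) := by
    have := Finset.sum_range_sub (f := fun i : ℕ => Real.log ((i:ℝ) + 1)) n
    simpa using this
  have hle : auxA n ≤ ∑ j ∈ range n, (Real.log ((j:ℝ) + 1 + 1) - Real.log ((j:ℝ) + 1)) := by
    apply Finset.sum_le_sum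
    intro j _
    have := key j
    have h : (j:ℝ) + 1 + 1 = (j:ℝ) + 2 := by ring
    rw [h]; exact this
  rw [tel] at hle
  norm_num at hle
  linarith [hle]

lemma auxA_tendsto : Tendsto auxA atTop atTop := by
  apply tendsto_atTop_mono (fun n => auxA_lower n)
  apply Filter.Tendsto.atTop_add _ tendsto_const_nhds
  apply Real.tendsto_log_atTop.comp
  apply tendsto_atTop_add_const_right
  exact tendsto_natCast_atTop_atTop

lemma auxA_div_log : Tendsto (fun n : ℕ => auxA n / Real.log n) atTop (nhds 1) := by
  have hlog : Tendsto (fun n : ℕ => Real.log n) atTop atTop :=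
    Real.tendsto_log_atTop.comp tendsto_natCast_atTop_atTop
  have hbound : ∀ᶠ n : ℕ in atTop, |auxA n - Real.log n| ≤ 2 := by
    filter_upwards [eventually_ge_atTop 2] with n hn
    have hn1 : (1:ℝ) ≤ (n:ℝ) := by exact_mod_cast Nat.one_le_of_lt hn
    have hl := auxA_lower n
    have hu := auxA_upper n
    have h1 : Real.log ((n:ℝ)+1) ≤ Real.log ((n:ℝ)) + Real.log 2 := by
      rw [← Real.log_mul (by linarith) (by norm_num)]
      apply Real.log_le_log (by linarith)
      linarith
    have h2 : Real.log ((n:ℝ)) ≤ Real.log ((n:ℝ)+2) := Real.log_le_log (by linarith) (by linarith)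
    have hlog2 : Real.log 2 ≤ 1 := by
      have := Real.log_le_sub_one_of_pos (x := 2) (by norm_num); linarith
    rw [abs_le]
    constructor <;> push_cast <;> linarith
  have hz : Tendsto (fun n : ℕ => (auxA n - Real.log n) / Real.log n) atTop (nhds 0) := by
    apply squeeze_zero_norm' (a := fun n : ℕ => 2 / Real.log n)
    · filter_upwards [hbound, hlog.eventually_ge_atTop 1] with n hb hl
      rw [norm_div, Real.norm_eq_abs, Real.norm_eq_abs,
        abs_of_pos (show (0:ℝ) < Real.log n from by linarith)]
      gcongr
    · exact Tendsto.div_atTop tendsto_const_nhds hlog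
  have := hz.const_add 1
  rw [add_zero] at this
  apply this.congr'
  filter_upwards [hlog.eventually_ge_atTop 1] with n hl
  have : Real.log n ≠ 0 := by linarith
  field_simp
  ring

noncomputable def auxC (k : ℕ) : ℕ :=
  Nat.find ((auxA_tendsto.eventually_ge_atTop ((k:ℝ)^2)).exists)

lemma auxC_spec (k : ℕ) : (k:ℝ)^2 ≤ auxA (auxC k) :=
  Nat.find_spec ((auxA_tendsto.eventually_ge_atTop ((k:ℝ)^2)).exists)

lemma auxC_min {k n : ℕ} (h : (k:ℝ)^2 ≤ auxA n) : auxC k ≤ n := Nat.find_min' _ h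

lemma auxA_auxC_le (k : ℕ) (hk : 1 ≤ k) : auxA (auxC k) ≤ (k:ℝ)^2 + 1 := by
  rcases Nat.eq_zero_or_eq_succ_pred (auxC k) with h0 | hs
  · have := auxC_spec k
    rw [h0] at this
    have h0' : auxA 0 = 0 := by simp [auxA]
    rw [h0'] at this
    have : (1:ℝ) ≤ (k:ℝ) := by exact_mod_cast hk
    nlinarith
  · set m := auxC k - 1 with hm
    have hlt : m < auxC k := by omega
    have := Nat.find_min ((auxA_tendsto.eventually_ge_atTop ((k:ℝ)^2)).exists) hlt
    push_neg at this
    have h2 := auxA_succ_le m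
    have : auxA (m + 1) < (k:ℝ)^2 + 1 := by linarith
    rw [show m + 1 = auxC k by omega] at this
    linarith

set_option maxHeartbeats 1000000 in
lemma det_tendsto (t : ℕ → ℝ) (ht_mono : Monotone t)
    (hgood : ∀ m : ℕ, ∀ᶠ k : ℕ in atTop,
      |t (auxC (k+1)) - auxA (auxC (k+1))| < 1/((m:ℝ)+1) * auxA (auxC (k+1))) :
    Tendsto (fun n => t n / auxA n) atTop (nhds 1) := by
  rw [Metric.tendsto_atTop]
  intro ε hε
  set e := min ε (1/2) with he_def
  have he : 0 < e := lt_min hε (by norm_num)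
  have he2 : e ≤ 1/2 := min_le_right _ _
  have heε : e ≤ ε := min_le_left _ _
  clear_value e
  obtain ⟨m, hm⟩ := exists_nat_one_div_lt (show (0:ℝ) < e/8 by linarith)
  set δ := 1/((m:ℝ)+1) with hδ_def
  have hδpos : 0 < δ := by positivity
  have hδ : δ < e/8 := hm
  clear_value δ
  obtain ⟨K₁, hK₁⟩ := (hgood m).exists_forall_of_atTop
  obtain ⟨M, hM⟩ : ∃ M : ℕ, 16 ≤ e * M := by
    refine ⟨⌈16/e⌉₊, ?_⟩
    have := Nat.le_ceil (16/e)
    rw [div_le_iff₀ he] at this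
    linarith [this]
  set K := max (max (K₁+1) M) 1 with hK_def
  clear_value K
  have hA : ∀ᶠ n : ℕ in atTop, ((K*K : ℕ) : ℝ) ≤ auxA n :=
    auxA_tendsto.eventually_ge_atTop _
  rw [eventually_atTop] at hA
  obtain ⟨N, hN⟩ := hA
  refine ⟨N, fun n hn => ?_⟩
  -- set up k
  set k := Nat.sqrt ⌊auxA n⌋₊ with hk_def
  have hfloor : (K*K : ℕ) ≤ ⌊auxA n⌋₊ := Nat.le_floor (hN n hn)
  have hkK : K ≤ k := Nat.le_sqrt.2 hfloor
  rw [hK_def] at hkK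
  have hk1 : 1 ≤ k := by omega
  have hkM : M ≤ k := by omega
  have hkK₁ : K₁ + 1 ≤ k := by omega
  have hkR : (1:ℝ) ≤ (k:ℝ) := by exact_mod_cast hk1
  have hke : 16 ≤ e * k := by
    calc (16:ℝ) ≤ e * M := hM
    _ ≤ e * k := by
        apply mul_le_mul_of_nonneg_left _ he.le
        exact_mod_cast hkM
  -- facts f1, f2
  have f1 : ((k:ℝ))^2 ≤ auxA n := by
    have h1 : k ^ 2 ≤ ⌊auxA n⌋₊ := Nat.sqrt_le' _
    have h2 : (⌊auxA n⌋₊ : ℝ) ≤ auxA n := Nat.floor_le (auxA_nonneg n)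
    calc ((k:ℝ))^2 = ((k^2 : ℕ) : ℝ) := by push_cast; ring
    _ ≤ (⌊auxA n⌋₊ : ℝ) := by exact_mod_cast h1
    _ ≤ auxA n := h2
  have f2 : auxA n < ((k:ℝ)+1)^2 := by
    have h1 : ⌊auxA n⌋₊ < (k+1) ^ 2 := Nat.lt_succ_sqrt' _
    have h2 : auxA n < (⌊auxA n⌋₊ : ℝ) + 1 := Nat.lt_floor_add_one _
    have h3 : (⌊auxA n⌋₊ : ℝ) + 1 ≤ (((k+1)^2 : ℕ) : ℝ) := by exact_mod_cast h1
    calc auxA n < (⌊auxA n⌋₊ : ℝ) + 1 := h2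
    _ ≤ (((k+1)^2 : ℕ) : ℝ) := h3
    _ = ((k:ℝ)+1)^2 := by push_cast; ring
  clear_value k
  have f3 : auxC k ≤ n := auxC_min f1
  have f4 : n < auxC (k+1) := by
    by_contra h
    push_neg at h
    have := auxA_mono h
    have h5 := auxC_spec (k+1)
    push_cast at h5
    linarith
  have f5a : t (auxC k) ≤ t n := ht_mono f3
  have f5b : t n ≤ t (auxC (k+1)) := ht_mono f4.le
  -- bounds on subsequence
  have g1 : |t (auxC (k+1)) - auxA (auxC (k+1))| < δ * auxA (auxC (k+1)) := by
    rw [hδ_def]; exact hK₁ k (by omega)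
  have g2 : |t (auxC k) - auxA (auxC k)| < δ * auxA (auxC k) := by
    obtain ⟨j, hj⟩ : ∃ j, k = j + 1 := ⟨k - 1, by omega⟩
    rw [hj, hδ_def]
    exact hK₁ j (by omega)
  have a1 : ((k:ℝ))^2 ≤ auxA (auxC k) := auxC_spec k
  have a2 : auxA (auxC k) ≤ (k:ℝ)^2 + 1 := auxA_auxC_le k hk1
  have a3 : (((k:ℝ))+1)^2 ≤ auxA (auxC (k+1)) := by
    have := auxC_spec (k+1); push_cast at this; linarith
  have a4 : auxA (auxC (k+1)) ≤ ((k:ℝ)+1)^2 + 1 := by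
    have := auxA_auxC_le (k+1) (by omega); push_cast at this; linarith
  have hδ1 : δ ≤ 1 := by linarith
  -- upper bound on t n
  have up : t n ≤ (1+δ) * (((k:ℝ)+1)^2 + 1) := by
    rw [abs_lt] at g1
    nlinarith [g1.2]
  have lo : (1-δ) * ((k:ℝ))^2 ≤ t n := by
    rw [abs_lt] at g2
    nlinarith [g2.1]
  have hanpos : 0 < auxA n := lt_of_lt_of_le (by positivity) f1
  -- key arithmetic
  have harith1 : (2:ℝ)*k + 2 ≤ 4*k := by linarith
  have harith2 : (4:ℝ)*k ≤ e*k^2/4 := by nlinarith [hke, hkR, he.le]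
  have hek2 : (0:ℝ) < e * (k:ℝ)^2 := mul_pos he (by positivity)
  have harith3 : δ*(((k:ℝ)+1)^2+1) ≤ (5*e/8)*k^2 := by
    have hc : (0:ℝ) ≤ ((k:ℝ)+1)^2+1 := by positivity
    have h1 : δ*(((k:ℝ)+1)^2+1) ≤ (e/8)*(((k:ℝ)+1)^2+1) :=
      mul_le_mul_of_nonneg_right hδ.le hc
    have h2 : ((k:ℝ)+1)^2+1 ≤ 5*(k:ℝ)^2 := by nlinarith [hkR]
    have h3 : (e/8)*(((k:ℝ)+1)^2+1) ≤ (e/8)*(5*(k:ℝ)^2) :=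
      mul_le_mul_of_nonneg_left h2 (by linarith)
    calc δ*(((k:ℝ)+1)^2+1) ≤ (e/8)*(((k:ℝ)+1)^2+1) := h1
    _ ≤ (e/8)*(5*(k:ℝ)^2) := h3
    _ = (5*e/8)*k^2 := by ring
  have key_up : (1+δ) * (((k:ℝ)+1)^2 + 1) < (1+e) * ((k:ℝ))^2 := by
    have expand : (1+e) * ((k:ℝ))^2 - (1+δ) * (((k:ℝ)+1)^2 + 1)
        = e*(k:ℝ)^2 - (2*(k:ℝ)+2) - δ*(((k:ℝ)+1)^2+1) := by ring
    linarith [expand, harith1, harith2, harith3, hek2]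
  have key_lo : (1-e) * (((k:ℝ))+1)^2 < (1-δ) * ((k:ℝ))^2 := by
    have h4 : δ*(k:ℝ)^2 ≤ (e/8)*(k:ℝ)^2 :=
      mul_le_mul_of_nonneg_right hδ.le (by positivity)
    have h5 : e*(k:ℝ)^2 ≤ e*((k:ℝ)+1)^2 := by
      apply mul_le_mul_of_nonneg_left _ he.le
      nlinarith [hkR]
    have expand : (1-δ) * ((k:ℝ))^2 - (1-e) * (((k:ℝ))+1)^2
        = e*((k:ℝ)+1)^2 - (2*(k:ℝ)+1) - δ*(k:ℝ)^2 := by ring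
    linarith [expand, harith1, harith2, h4, h5, hek2]
  have hup : t n < (1+e) * auxA n := by
    have : (1+e) * ((k:ℝ))^2 ≤ (1+e) * auxA n :=
      mul_le_mul_of_nonneg_left f1 (by linarith)
    linarith
  have hlo : (1-e) * auxA n < t n := by
    have : (1-e) * auxA n ≤ (1-e) * ((k:ℝ)+1)^2 :=
      mul_le_mul_of_nonneg_left f2.le (by linarith)
    linarith
  have hdu : t n / auxA n < 1 + e := by
    rw [div_lt_iff₀ hanpos]; linarith
  have hdl : 1 - e < t n / auxA n := by
    rw [lt_div_iff₀ hanpos]; linarith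
  rw [Real.dist_eq, abs_lt]
  exact ⟨by linarith, by linarith⟩

/-- For independent Bernoulli variables `I j` with success
probability `1/(j+2)` and `τ n = ∑_{j<n} I j`, one has `τ n / log n → 1`
almost surely as `n → ∞`. -/
theorem tau_over_log_tendsto_one_ae
    {Ω : Type*} [MeasurableSpace Ω] (μ : Measure Ω) [IsProbabilityMeasure μ]
    (I : ℕ → Ω → ℝ) (hmeas : ∀ j, Measurable (I j))
    (h01 : ∀ j ω, I j ω = 0 ∨ I j ω = 1)
    (hber : ∀ j, μ {ω | I j ω = 1} = ENNReal.ofReal (1 / (j + 2 : ℝ)))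
    (hindep : iIndepFun I μ)
    (τ : ℕ → Ω → ℝ) (hτ : ∀ n ω, τ n ω = ∑ j ∈ range n, I j ω) :
    ∀ᵐ ω ∂μ, Tendsto (fun n : ℕ => τ n ω / Real.log n) atTop (nhds 1) := by
  have hmem : ∀ j, MemLp (I j) 2 μ := by
    intro j
    apply MemLp.of_bound (hmeas j).aestronglyMeasurable 1
    apply ae_of_all
    intro ω
    rcases h01 j ω with h | h <;> simp [h]
  have hint : ∀ j, ∫ ω, I j ω ∂μ = 1 / ((j:ℝ) + 2) := by
    intro j
    have hset : MeasurableSet {ω | I j ω = 1} := hmeas j (measurableSet_singleton 1)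
    have hind : I j = Set.indicator {ω | I j ω = 1} (fun _ => (1:ℝ)) := by
      funext ω
      rcases h01 j ω with h | h
      · rw [h, Set.indicator_of_notMem]
        simp only [Set.mem_setOf_eq, h]
        norm_num
      · rw [h, Set.indicator_of_mem]
        exact h
    calc ∫ ω, I j ω ∂μ = ∫ ω, Set.indicator {ω | I j ω = 1} (fun _ => (1:ℝ)) ω ∂μ := by
          rw [← hind]
    _ = (μ {ω | I j ω = 1}).toReal • (1:ℝ) := integral_indicator_const _ hset
    _ = 1 / ((j:ℝ) + 2) := by
          rw [hber j, smul_eq_mul, mul_one, ENNReal.toReal_ofReal (by positivity)]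
  have hvar : ∀ j, variance (I j) μ ≤ 1 / ((j:ℝ) + 2) := by
    intro j
    have hsq : (I j) ^ 2 = I j := by
      funext ω
      rcases h01 j ω with h | h <;> simp [h]
    rw [variance_eq_sub (hmem j), hsq, hint j]
    nlinarith [sq_nonneg (1 / ((j:ℝ) + 2))]
  have hτsum : ∀ n, τ n = ∑ j ∈ range n, I j := by
    intro n; funext ω; rw [hτ]; simp
  have hτmem : ∀ n, MemLp (τ n) 2 μ := by
    intro n
    rw [hτsum n]
    exact memLp_finsetSum' _ fun j _ => hmem j
  have hEτ : ∀ n, ∫ ω, τ n ω ∂μ = auxA n := by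
    intro n
    rw [hτsum n]
    have : ∫ ω, (∑ j ∈ range n, I j) ω ∂μ = ∫ ω, ∑ j ∈ range n, I j ω ∂μ := by
      simp [Finset.sum_apply]
    rw [this, integral_finset_sum _ fun j _ => (hmem j).integrable one_le_two]
    rw [auxA]
    exact Finset.sum_congr rfl fun j _ => hint j
  have hVarτ : ∀ n, variance (τ n) μ ≤ auxA n := by
    intro n
    rw [hτsum n, IndepFun.variance_sum (fun j _ => hmem j)
      (fun i _ j _ hij => hindep.indepFun hij)]
    exact Finset.sum_le_sum fun j _ => hvar j
  -- Borel-Cantelli part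
  have hBC : ∀ m : ℕ, ∀ᵐ ω ∂μ, ∀ᶠ k : ℕ in atTop,
      |τ (auxC (k+1)) ω - auxA (auxC (k+1))| < 1/((m:ℝ)+1) * auxA (auxC (k+1)) := by
    intro m
    set δ := 1/((m:ℝ)+1) with hδ_def
    have hδ : 0 < δ := by positivity
    set S : ℕ → Set Ω := fun k =>
      {ω | δ * auxA (auxC (k+1)) ≤ |τ (auxC (k+1)) ω - auxA (auxC (k+1))|} with hS_def
    have hbound : ∀ k, μ (S k) ≤ ENNReal.ofReal (1/(δ^2 * ((k:ℝ)+1)^2)) := by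
      intro k
      have ha1 : ((k:ℝ)+1)^2 ≤ auxA (auxC (k+1)) := by
        have := auxC_spec (k+1); push_cast at this; linarith
      have hapos : 0 < auxA (auxC (k+1)) := lt_of_lt_of_le (by positivity) ha1
      have hpos : 0 < δ * auxA (auxC (k+1)) := mul_pos hδ hapos
      have cheb := meas_ge_le_variance_div_sq (hτmem (auxC (k+1))) hpos
      rw [hEτ] at cheb
      refine le_trans cheb (ENNReal.ofReal_le_ofReal ?_)
      calc variance (τ (auxC (k+1))) μ / (δ * auxA (auxC (k+1)))^2
          ≤ auxA (auxC (k+1)) / (δ * auxA (auxC (k+1)))^2 := by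
            gcongr
            exact hVarτ _
      _ = 1 / (δ^2 * auxA (auxC (k+1))) := by
            field_simp
      _ ≤ 1/(δ^2 * ((k:ℝ)+1)^2) := by gcongr
    have hsummable : Summable (fun k : ℕ => 1/(δ^2 * ((k:ℝ)+1)^2)) := by
      have h1 : Summable (fun k : ℕ => 1/((k:ℝ)+1)^2) := by
        have := Real.summable_one_div_nat_pow.2 (show 1 < 2 by norm_num)
        exact_mod_cast (summable_nat_add_iff 1).2 this
      have := h1.mul_left (1/δ^2)
      apply this.congr
      intro k
      field_simp
    have hsum : (∑' k, μ (S k)) ≠ ⊤ := by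
      apply ne_top_of_le_ne_top _ (ENNReal.tsum_le_tsum hbound)
      rw [← ENNReal.ofReal_tsum_of_nonneg (fun k => by positivity) hsummable]
      exact ENNReal.ofReal_ne_top
    filter_upwards [ae_eventually_notMem hsum] with ω hω
    filter_upwards [hω] with k hk
    exact lt_of_not_ge hk
  have hae := (ae_all_iff).2 hBC
  filter_upwards [hae] with ω hω
  have hmono : Monotone (fun n => τ n ω) := by
    apply monotone_nat_of_le_succ
    intro n
    rw [hτ, hτ, Finset.sum_range_succ]
    rcases h01 n ω with h | h <;> simp [h]
  have h1 : Tendsto (fun n => τ n ω / auxA n) atTop (nhds 1) := det_tendsto _ hmono hω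
  have h2 := h1.mul auxA_div_log
  rw [mul_one] at h2
  apply h2.congr'
  filter_upwards [eventually_ge_atTop 1] with n hn
  have hA : auxA n ≠ 0 := by
    have h1 : auxA 1 ≤ auxA n := auxA_mono hn
    have : auxA 1 = 1/2 := by norm_num [auxA]
    rw [this] at h1
    linarith
  rw [div_mul_div_comm, mul_comm (τ n ω) (auxA n), mul_div_mul_left _ _ hA]
end

section
/- Let Z_n be the (n+1)-th color drawn in the balanced urn model with color set S, initial distribution U_0 ∈ 𝒫(S), and replacement kernel R. Let (X_n)_{n≥0} be the Markov chain on S with transition kernel R and initial distribution U_0, and let τ_n be the depth-minus-one of vertex n in an independent random recursive tree (a sum of independent Bernoulli(1/(j+2)) indicators, j = 0, …, n−1). Then Z_n has the same distribution as X_{τ_n}. -/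
open MeasureTheory ProbabilityTheory Filter Finset
open scoped ENNReal

/-- Marginal Representation Theorem: For the balanced urn on a
measurable color space `S` with replacement (Markov) kernel `κ` and initial
probability distribution `u0` — so `U (n+1) ω = U n ω + κ (Z n ω)` and,
conditionally on the past, `Z n ∼ U n/(n+1)` — let `(X m)` be the Markov chain
with kernel `κ` and initial distribution `u0`, and let `τ n = ∑_{j<n} I j` be
the depth-minus-one of vertex `n` in an independent random recursive tree
(`I j` independent Bernoulli(1/(j+2)), independent of the chain).  Then for
every `n`, `Z n` has the same distribution as `X (τ n)`. -/
theorem marginal_representation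
    {S : Type*} [MeasurableSpace S]
    (κ : Kernel S S) [IsMarkovKernel κ]
    (u0 : Measure S) [IsProbabilityMeasure u0]
    -- the urn process
    {Ω : Type*} [MeasurableSpace Ω] (μ : Measure Ω) [IsProbabilityMeasure μ]
    (Z : ℕ → Ω → S) (hZmeas : ∀ n, Measurable (Z n))
    (U : ℕ → Ω → Measure S)
    (hU0 : ∀ ω, U 0 ω = u0)
    (hUrec : ∀ n ω, U (n + 1) ω = U n ω + κ (Z n ω))
    (hdraw : ∀ n : ℕ, ∀ A : Set S, MeasurableSet A → ∀ B : Set Ω,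
      MeasurableSet[⨆ k ∈ range n, MeasurableSpace.comap (Z k) inferInstance] B →
      μ (B ∩ Z n ⁻¹' A) = ∫⁻ ω in B, U n ω A / (n + 1 : ℝ≥0∞) ∂μ)
    -- the associated Markov chain together with the independent times τ
    {Ω' : Type*} [MeasurableSpace Ω'] (μ' : Measure Ω') [IsProbabilityMeasure μ']
    (X : ℕ → Ω' → S) (hXmeas : ∀ m, Measurable (X m))
    (hX0 : μ'.map (X 0) = u0)
    (hmarkov : ∀ n : ℕ, ∀ A : Set S, MeasurableSet A → ∀ B : Set Ω',
      MeasurableSet[⨆ k ∈ range (n + 1), MeasurableSpace.comap (X k) inferInstance] B →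
      μ' (B ∩ X (n + 1) ⁻¹' A) = ∫⁻ ω in B, κ (X n ω) A ∂μ')
    (I : ℕ → Ω' → ℕ) (hImeas : ∀ j, Measurable (I j))
    (hI01 : ∀ j ω, I j ω = 0 ∨ I j ω = 1)
    (hber : ∀ j, μ' {ω | I j ω = 1} = ENNReal.ofReal (1 / (j + 2 : ℝ)))
    (hindep : iIndepFun I μ')
    (hIX : IndepFun (fun ω (m : ℕ) => X m ω) (fun ω (j : ℕ) => I j ω) μ')
    (τ : ℕ → Ω' → ℕ) (hτ : ∀ n ω, τ n ω = ∑ j ∈ range n, I j ω) :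
    ∀ n : ℕ, μ.map (Z n) = μ'.map (fun ω => X (τ n ω) ω) := by
  classical
  -- basic facts about τ
  have hτmeas : ∀ n, Measurable (τ n) := by
    intro n
    have h : (τ n) = fun ω => ∑ j ∈ range n, I j ω := funext (hτ n)
    rw [h]
    exact Finset.measurable_sum _ fun j _ => hImeas j
  have hτle : ∀ n ω, τ n ω ≤ n := by
    intro n ω
    rw [hτ]
    calc ∑ j ∈ range n, I j ω ≤ ∑ _j ∈ range n, 1 :=
          Finset.sum_le_sum (fun j _ => by rcases hI01 j ω with h | h <;> simp [h])
    _ = n := by simp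
  have hXτmeas : ∀ n, Measurable fun ω => X (τ n ω) ω := by
    intro n
    have h1 : Measurable fun p : Ω' × ℕ => X p.2 p.1 :=
      measurable_from_prod_countable_left fun k => hXmeas k
    exact h1.comp (measurable_id.prodMk (hτmeas n))
  -- independence of τ n and X k
  have hindXτ : ∀ n k : ℕ, IndepFun (X k) (τ n) μ' := by
    intro n k
    have h := hIX.comp (φ := fun f : ℕ → S => f k) (ψ := fun g : ℕ → ℕ => ∑ j ∈ range n, g j)
      (measurable_pi_apply (X := fun _ : ℕ => S) k)
      (Finset.measurable_sum _ fun j _ => measurable_pi_apply (X := fun _ : ℕ => ℕ) j)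
    have h2 : (fun g : ℕ → ℕ => ∑ j ∈ range n, g j) ∘ (fun ω (j : ℕ) => I j ω) = τ n := by
      funext ω
      rw [hτ]
      rfl
    rw [h2] at h
    exact h
  -- independence of τ n and I n
  have hτI : ∀ n, IndepFun (τ n) (I n) μ' := by
    intro n
    have h := hindep.indepFun_sum_range_succ hImeas n
    have h2 : (∑ j ∈ range n, I j) = τ n := by
      funext ω
      rw [hτ]
      simp
    rwa [h2] at h
  -- one step of the Markov chain
  have hmA : ∀ (k : ℕ) (A : Set S), MeasurableSet A →
      μ' (X (k + 1) ⁻¹' A) = ∫⁻ ω, κ (X k ω) A ∂μ' := by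
    intro k A hA
    have h := hmarkov k A hA Set.univ MeasurableSet.univ
    simpa using h
  -- product formula
  have hprod : ∀ (n k : ℕ) (t : Set ℕ) (A : Set S), MeasurableSet A →
      μ' (τ n ⁻¹' t ∩ X k ⁻¹' A) = μ' (τ n ⁻¹' t) * μ' (X k ⁻¹' A) := by
    intro n k t A hA
    have h := (hindXτ n k).symm.measure_inter_preimage_eq_mul t A
      MeasurableSet.of_discrete hA
    exact h
  -- splitting over the values of τ
  have hsplit : ∀ (n : ℕ) (A : Set S), MeasurableSet A →
      μ' ((fun ω => X (τ n ω) ω) ⁻¹' A)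
        = ∑ k ∈ range (n + 1), μ' (τ n ⁻¹' {k}) * μ' (X k ⁻¹' A) := by
    intro n A hA
    have hset : (fun ω => X (τ n ω) ω) ⁻¹' A
        = ⋃ k ∈ range (n + 1), (τ n ⁻¹' {k} ∩ X k ⁻¹' A) := by
      ext ω
      simp only [Set.mem_preimage, Set.mem_iUnion, Set.mem_inter_iff, mem_range,
        Set.mem_singleton_iff]
      constructor
      · intro h
        exact ⟨τ n ω, Nat.lt_succ_of_le (hτle n ω), rfl, h⟩
      · rintro ⟨k, -, rfl, h⟩
        exact h
    rw [hset, measure_biUnion_finset ?hd ?hm]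
    · exact Finset.sum_congr rfl fun k _ => hprod n k {k} A hA
    case hd =>
      intro i _ j _ hij
      refine Set.disjoint_left.2 fun ω hωi hωj => hij ?_
      have h1 : τ n ω = i := hωi.1
      have h2 : τ n ω = j := hωj.1
      rw [← h1, h2]
    case hm =>
      intro k _
      exact ((hτmeas n) (measurableSet_singleton k)).inter (hXmeas k hA)
  -- splitting the integral over the values of τ
  have hint : ∀ (n : ℕ) (A : Set S), MeasurableSet A →
      ∫⁻ ω, κ (X (τ n ω) ω) A ∂μ'
        = ∑ k ∈ range (n + 1), μ' (τ n ⁻¹' {k}) * ∫⁻ ω, κ (X k ω) A ∂μ' := by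
    intro n A hA
    have hpt : ∀ ω, κ (X (τ n ω) ω) A
        = ∑ k ∈ range (n + 1), (if τ n ω = k then (1 : ℝ≥0∞) else 0) * κ (X k ω) A := by
      intro ω
      have h1 : ∀ k, (if τ n ω = k then (1 : ℝ≥0∞) else 0) * κ (X k ω) A
          = if τ n ω = k then κ (X k ω) A else 0 := by
        intro k
        split <;> simp
      simp only [h1]
      rw [Finset.sum_ite_eq (range (n + 1)) (τ n ω) (fun k => κ (X k ω) A)]
      simp [Nat.lt_succ_of_le (hτle n ω)]
    have hφmeas : ∀ k : ℕ, Measurable fun ω => (if τ n ω = k then (1 : ℝ≥0∞) else 0) := by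
      intro k
      exact Measurable.ite (hτmeas n (measurableSet_singleton k)) measurable_const
        measurable_const
    calc ∫⁻ ω, κ (X (τ n ω) ω) A ∂μ'
        = ∫⁻ ω, ∑ k ∈ range (n + 1),
            (if τ n ω = k then (1 : ℝ≥0∞) else 0) * κ (X k ω) A ∂μ' := lintegral_congr hpt
      _ = ∑ k ∈ range (n + 1),
            ∫⁻ ω, (if τ n ω = k then (1 : ℝ≥0∞) else 0) * κ (X k ω) A ∂μ' := by
          exact lintegral_finset_sum _ fun k _ =>
            (hφmeas k).mul ((κ.measurable_coe hA).comp (hXmeas k))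
      _ = ∑ k ∈ range (n + 1), μ' (τ n ⁻¹' {k}) * ∫⁻ ω, κ (X k ω) A ∂μ' := by
          refine Finset.sum_congr rfl fun k _ => ?_
          have hind : IndepFun (fun ω => (if τ n ω = k then (1 : ℝ≥0∞) else 0))
              (fun ω => κ (X k ω) A) μ' := by
            have h := (hindXτ n k).symm.comp
              (φ := fun t : ℕ => if t = k then (1 : ℝ≥0∞) else 0)
              (ψ := fun s => κ s A) (Measurable.of_discrete) (κ.measurable_coe hA)
            exact h
          have h := lintegral_mul_eq_lintegral_mul_lintegral_of_indepFun
            (hφmeas k) ((κ.measurable_coe hA).comp (hXmeas k)) hind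
          simp only [Pi.mul_apply, Function.comp] at h
          rw [h]
          congr 1
          have h2 : (fun ω => (if τ n ω = k then (1 : ℝ≥0∞) else 0))
              = (τ n ⁻¹' {k}).indicator (fun _ => 1) := by
            funext ω
            by_cases hc : τ n ω = k <;> simp [Set.indicator, hc]
          rw [h2]
          exact lintegral_indicator_one (hτmeas n (measurableSet_singleton k))
  -- Bernoulli values
  have hb : ∀ n : ℕ, μ' (I n ⁻¹' {1}) = ((n : ℝ≥0∞) + 2)⁻¹ := by
    intro n
    have h : {ω | I n ω = 1} = I n ⁻¹' {1} := rfl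
    rw [← h, hber n, one_div, ENNReal.ofReal_inv_of_pos (by positivity)]
    congr 1
    rw [show ((n : ℝ) + 2) = ((n + 2 : ℕ) : ℝ) by push_cast; ring, ENNReal.ofReal_natCast]
    push_cast
    ring
  have hab : ∀ n : ℕ, μ' (I n ⁻¹' {0}) + μ' (I n ⁻¹' {1}) = 1 := by
    intro n
    rw [← measure_union ?_ (hImeas n (measurableSet_singleton 1))]
    · have h : I n ⁻¹' {0} ∪ I n ⁻¹' {1} = Set.univ := by
        ext ω
        simpa using hI01 n ω
      rw [h, measure_univ]
    · refine Set.disjoint_left.2 fun ω h0 h1 => ?_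
      simp only [Set.mem_preimage, Set.mem_singleton_iff] at h0 h1
      omega
  -- recursion for the law of τ
  have hτsucc : ∀ n ω, τ (n + 1) ω = τ n ω + I n ω := by
    intro n ω
    rw [hτ, hτ, Finset.sum_range_succ]
  have hpstep : ∀ n k : ℕ,
      μ' (τ (n + 1) ⁻¹' {k})
        = μ' (τ n ⁻¹' {k}) * μ' (I n ⁻¹' {0})
          + μ' (τ n ⁻¹' (Nat.succ ⁻¹' {k})) * μ' (I n ⁻¹' {1}) := by
    intro n k
    have hset : τ (n + 1) ⁻¹' {k}
        = (τ n ⁻¹' {k} ∩ I n ⁻¹' {0}) ∪ (τ n ⁻¹' (Nat.succ ⁻¹' {k}) ∩ I n ⁻¹' {1}) := by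
      ext ω
      simp only [Set.mem_preimage, Set.mem_singleton_iff, Set.mem_union, Set.mem_inter_iff]
      rw [hτsucc]
      rcases hI01 n ω with h | h <;> simp [h, Nat.succ_eq_add_one] <;> omega
    rw [hset, measure_union ?_ ?_]
    · rw [(hτI n).measure_inter_preimage_eq_mul {k} {0} MeasurableSet.of_discrete
        MeasurableSet.of_discrete,
        (hτI n).measure_inter_preimage_eq_mul (Nat.succ ⁻¹' {k}) {1} MeasurableSet.of_discrete
        MeasurableSet.of_discrete]
    · refine Set.disjoint_left.2 fun ω h0 h1 => ?_
      have := h0.2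
      have := h1.2
      simp only [Set.mem_preimage, Set.mem_singleton_iff] at *
      omega
    · exact ((hτmeas n) MeasurableSet.of_discrete).inter (hImeas n (measurableSet_singleton 1))
  have hpn1 : ∀ n : ℕ, μ' (τ n ⁻¹' {n + 1}) = 0 := by
    intro n
    have h : τ n ⁻¹' {n + 1} = ∅ := by
      ext ω
      simp only [Set.mem_preimage, Set.mem_singleton_iff, Set.mem_empty_iff_false,
        iff_false]
      have := hτle n ω
      omega
    rw [h, measure_empty]
  -- one step recursion for the law of X ∘ τ
  have hlamstep : ∀ (n : ℕ) (A : Set S), MeasurableSet A →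
      ((n : ℝ≥0∞) + 2) * μ' ((fun ω => X (τ (n + 1) ω) ω) ⁻¹' A)
        = ((n : ℝ≥0∞) + 1) * μ' ((fun ω => X (τ n ω) ω) ⁻¹' A)
          + ∫⁻ ω, κ (X (τ n ω) ω) A ∂μ' := by
    intro n A hA
    set a := μ' (I n ⁻¹' {0}) with ha_def
    set b := μ' (I n ⁻¹' {1}) with hb_def
    set c : ℝ≥0∞ := (n : ℝ≥0∞) + 2 with hc_def
    have hc0 : c ≠ 0 := by
      simp [hc_def]
    have hct : c ≠ ∞ := by
      finiteness
    have hcb : c * b = 1 := by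
      rw [hb_def, hb n, ← hc_def]
      exact ENNReal.mul_inv_cancel hc0 hct
    have hca : c * a = (n : ℝ≥0∞) + 1 := by
      have h1 : c * a + c * b = c := by
        rw [← mul_add, ha_def, hb_def, hab n, mul_one]
      rw [hcb] at h1
      have h2 : c = ((n : ℝ≥0∞) + 1) + 1 := by
        rw [hc_def]
        ring
      have h1' := h1.trans h2
      rw [add_comm (c * a) 1, add_comm ((n : ℝ≥0∞) + 1) 1] at h1'
      exact (ENNReal.add_right_inj ENNReal.one_ne_top).1 h1'
    have e1 : μ' ((fun ω => X (τ (n + 1) ω) ω) ⁻¹' A)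
        = ∑ k ∈ range (n + 2), μ' (τ (n + 1) ⁻¹' {k}) * μ' (X k ⁻¹' A) :=
      hsplit (n + 1) A hA
    have e2 : ∑ k ∈ range (n + 2), μ' (τ (n + 1) ⁻¹' {k}) * μ' (X k ⁻¹' A)
        = a * (∑ k ∈ range (n + 2), μ' (τ n ⁻¹' {k}) * μ' (X k ⁻¹' A))
          + b * (∑ k ∈ range (n + 2),
              μ' (τ n ⁻¹' (Nat.succ ⁻¹' {k})) * μ' (X k ⁻¹' A)) := by
      rw [Finset.mul_sum, Finset.mul_sum, ← Finset.sum_add_distrib]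
      refine Finset.sum_congr rfl fun k _ => ?_
      rw [hpstep n k]
      ring
    have e3 : ∑ k ∈ range (n + 2), μ' (τ n ⁻¹' {k}) * μ' (X k ⁻¹' A)
        = μ' ((fun ω => X (τ n ω) ω) ⁻¹' A) := by
      rw [Finset.sum_range_succ, hpn1 n, zero_mul, add_zero]
      exact (hsplit n A hA).symm
    have e4 : ∑ k ∈ range (n + 2), μ' (τ n ⁻¹' (Nat.succ ⁻¹' {k})) * μ' (X k ⁻¹' A)
        = ∫⁻ ω, κ (X (τ n ω) ω) A ∂μ' := by
      rw [Finset.sum_range_succ']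
      have h0 : Nat.succ ⁻¹' ({0} : Set ℕ) = ∅ := by
        ext j
        simp
      rw [h0]
      simp only [Set.preimage_empty, measure_empty, zero_mul, add_zero]
      rw [hint n A hA]
      refine Finset.sum_congr rfl fun l _ => ?_
      have hsucc : Nat.succ ⁻¹' ({l + 1} : Set ℕ) = {l} := by
        ext j
        simp
      rw [hsucc, hmA l A hA]
    rw [e1, e2, e3, e4, mul_add, ← mul_assoc, ← mul_assoc, hca, hcb, one_mul]
  -- measurability of the urn masses
  have hUform : ∀ (n : ℕ) ω, U n ω = u0 + ∑ j ∈ range n, κ (Z j ω) := by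
    intro n
    induction n with
    | zero => intro ω; simp [hU0]
    | succ n ih =>
      intro ω
      rw [hUrec, ih, Finset.sum_range_succ, add_assoc]
  have hUAmeas : ∀ (n : ℕ) (A : Set S), MeasurableSet A → Measurable fun ω => U n ω A := by
    intro n A hA
    have h : (fun ω => U n ω A) = fun ω => u0 A + ∑ j ∈ range n, κ (Z j ω) A := by
      funext ω
      rw [hUform]
      simp [Measure.finset_sum_apply]
    rw [h]
    exact measurable_const.add
      (Finset.measurable_sum _ fun j _ => (κ.measurable_coe hA).comp (hZmeas j))
  -- the urn marginal in terms of the mean measure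
  have hνe : ∀ (n : ℕ) (A : Set S), MeasurableSet A →
      ((n : ℝ≥0∞) + 1) * μ (Z n ⁻¹' A) = ∫⁻ ω, U n ω A ∂μ := by
    intro n A hA
    have h := hdraw n A hA Set.univ MeasurableSet.univ
    rw [Set.univ_inter, Measure.restrict_univ] at h
    have h2 : ∫⁻ ω, U n ω A / ((n : ℝ≥0∞) + 1) ∂μ
        = (∫⁻ ω, U n ω A ∂μ) * ((n : ℝ≥0∞) + 1)⁻¹ := by
      simp_rw [div_eq_mul_inv]
      exact lintegral_mul_const _ (hUAmeas n A hA)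
    rw [h, h2, mul_comm, mul_assoc, ENNReal.inv_mul_cancel (by simp) (by finiteness), mul_one]
  -- the one step recursion for the urn
  have hZstep : ∀ (n : ℕ) (A : Set S), MeasurableSet A →
      ((n : ℝ≥0∞) + 2) * μ (Z (n + 1) ⁻¹' A)
        = ((n : ℝ≥0∞) + 1) * μ (Z n ⁻¹' A) + ∫⁻ ω, κ (Z n ω) A ∂μ := by
    intro n A hA
    have h := hνe (n + 1) A hA
    have hcast : (((n + 1 : ℕ)) : ℝ≥0∞) + 1 = (n : ℝ≥0∞) + 2 := by
      push_cast
      ring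
    rw [hcast] at h
    rw [h]
    have hpt : ∀ ω, U (n + 1) ω A = U n ω A + κ (Z n ω) A := by
      intro ω
      rw [hUrec]
      rfl
    calc ∫⁻ ω, U (n + 1) ω A ∂μ
        = ∫⁻ ω, (U n ω A + κ (Z n ω) A) ∂μ := lintegral_congr hpt
      _ = (∫⁻ ω, U n ω A ∂μ) + ∫⁻ ω, κ (Z n ω) A ∂μ :=
          lintegral_add_left (hUAmeas n A hA) _
      _ = ((n : ℝ≥0∞) + 1) * μ (Z n ⁻¹' A) + ∫⁻ ω, κ (Z n ω) A ∂μ := by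
          rw [hνe n A hA]
  -- main induction
  intro n
  induction n with
  | zero =>
    have hZ0 : μ.map (Z 0) = u0 := by
      ext A hA
      rw [Measure.map_apply (hZmeas 0) hA]
      have h := hνe 0 A hA
      simp only [Nat.cast_zero, zero_add, one_mul] at h
      rw [h]
      simp [hU0]
    have hfun : (fun ω => X (τ 0 ω) ω) = X 0 := by
      funext ω
      rw [hτ]
      simp
    rw [hZ0, hfun, hX0]
  | succ n ih =>
    ext A hA
    rw [Measure.map_apply (hZmeas (n + 1)) hA, Measure.map_apply (hXτmeas (n + 1)) hA]
    have hbridge : ∫⁻ ω, κ (Z n ω) A ∂μ = ∫⁻ ω, κ (X (τ n ω) ω) A ∂μ' := by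
      rw [← lintegral_map (κ.measurable_coe hA) (hZmeas n),
        ← lintegral_map (κ.measurable_coe hA) (hXτmeas n), ih]
    have hμeq : μ (Z n ⁻¹' A) = μ' ((fun ω => X (τ n ω) ω) ⁻¹' A) := by
      rw [← Measure.map_apply (hZmeas n) hA, ← Measure.map_apply (hXτmeas n) hA, ih]
    have h1 := hZstep n A hA
    have h2 := hlamstep n A hA
    rw [hμeq, hbridge, ← h2] at h1
    exact (ENNReal.mul_right_inj (by simp) (by finiteness)).1 h1
end

section
/- The sequence of colors (Z_n)_{n≥0} drawn from a balanced urn with kernel R and initial distribution U_0 is equal in distribution to the branching Markov chain (W_n)_{n≥0} on the random recursive tree with root −1 started at an auxiliary state Δ, where each vertex n attaches uniformly to a random earlier vertex D_n and W_n is drawn from R̂(W_{D_n}, ·), with R̂(Δ, ·) = U_0 and R̂(s, ·) = R(s, ·) for s ∈ S. -/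
open MeasureTheory ProbabilityTheory Filter Finset
open scoped ENNReal

lemma grt_indep_setLIntegral {Ω : Type*} [mΩ : MeasurableSpace Ω] {μ : Measure Ω}
    {m1 m2 : MeasurableSpace Ω} (h1 : m1 ≤ mΩ) (h2 : m2 ≤ mΩ)
    (hind : Indep m1 m2 μ) {t B : Set Ω} (ht : MeasurableSet[m1] t)
    (hB : MeasurableSet[m2] B) {f : Ω → ℝ≥0∞} (hf : Measurable[m2] f) :
    ∫⁻ ω in B ∩ t, f ω ∂μ = μ t * ∫⁻ ω in B, f ω ∂μ := by
  have key := lintegral_mul_eq_lintegral_mul_lintegral_of_independent_measurableSpace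
    (f := t.indicator (fun _ => (1 : ℝ≥0∞))) (g := B.indicator f)
    h1 h2 hind (measurable_const.indicator ht) (hf.indicator hB)
  have e1 : ∀ ω, t.indicator (fun _ => (1 : ℝ≥0∞)) ω * B.indicator f ω
      = (B ∩ t).indicator f ω := by
    intro ω
    by_cases hωt : ω ∈ t <;> by_cases hωB : ω ∈ B <;>
      simp [Set.indicator_apply, hωt, hωB]
  calc ∫⁻ ω in B ∩ t, f ω ∂μ
      = ∫⁻ ω, (B ∩ t).indicator f ω ∂μ :=
        (lintegral_indicator ((h2 B hB).inter (h1 t ht)) f).symm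
    _ = ∫⁻ ω, t.indicator (fun _ => (1 : ℝ≥0∞)) ω * B.indicator f ω ∂μ :=
        lintegral_congr fun ω => (e1 ω).symm
    _ = (∫⁻ ω, t.indicator (fun _ => (1 : ℝ≥0∞)) ω ∂μ) * ∫⁻ ω, B.indicator f ω ∂μ := key
    _ = μ t * ∫⁻ ω in B, f ω ∂μ := by
        rw [lintegral_indicator (h1 t ht), lintegral_indicator (h2 B hB), setLIntegral_one]

/-- Grand Representation Theorem: The full sequence of colors
`(Z n)` of the balanced urn with kernel `κ` and initial distribution `u0`
equals in distribution the branching Markov chain `(W n)` on the random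
recursive tree rooted at an auxiliary vertex (the root carrying the state `Δ`):
vertex `n` attaches to the uniformly chosen earlier vertex `D n` (coded so that
`D n = 0` is the root `-1` and `D n = k+1` is vertex `k`, `k ≤ n-1`),
independently of the past, and `W n` is drawn from `R̂(W (D n), ·)`, where
`R̂(Δ,·) = u0` and `R̂(s,·) = κ(s,·)` for `s ∈ S`. -/
theorem grand_representation
    {S : Type*} [MeasurableSpace S]
    (κ : Kernel S S) [IsMarkovKernel κ]
    (u0 : Measure S) [IsProbabilityMeasure u0]
    -- the urn process
    {Ω : Type*} [MeasurableSpace Ω] (μ : Measure Ω) [IsProbabilityMeasure μ]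
    (Z : ℕ → Ω → S) (hZmeas : ∀ n, Measurable (Z n))
    (U : ℕ → Ω → Measure S)
    (hU0 : ∀ ω, U 0 ω = u0)
    (hUrec : ∀ n ω, U (n + 1) ω = U n ω + κ (Z n ω))
    (hdraw : ∀ n : ℕ, ∀ A : Set S, MeasurableSet A → ∀ B : Set Ω,
      MeasurableSet[⨆ k ∈ range n, MeasurableSpace.comap (Z k) inferInstance] B →
      μ (B ∩ Z n ⁻¹' A) = ∫⁻ ω in B, U n ω A / (n + 1 : ℝ≥0∞) ∂μ)
    -- the branching Markov chain on the random recursive tree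
    {Ω' : Type*} [MeasurableSpace Ω'] (μ' : Measure Ω') [IsProbabilityMeasure μ']
    (W : ℕ → Ω' → S) (hWmeas : ∀ n, Measurable (W n))
    (D : ℕ → Ω' → ℕ) (hDmeas : ∀ n, Measurable (D n))
    (hDrange : ∀ n ω, D n ω ≤ n)
    (hDunif : ∀ n : ℕ, ∀ k ≤ n,
      μ' {ω | D n ω = k} = ENNReal.ofReal (1 / (n + 1 : ℝ)))
    (hDindep : ∀ n : ℕ,
      Indep (MeasurableSpace.comap (D n) inferInstance)
        ((⨆ k ∈ range n, MeasurableSpace.comap (W k) inferInstance) ⊔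
          (⨆ k ∈ range n, MeasurableSpace.comap (D k) inferInstance)) μ')
    (hWdraw : ∀ n : ℕ, ∀ A : Set S, MeasurableSet A → ∀ B : Set Ω',
      MeasurableSet[(⨆ k ∈ range n, MeasurableSpace.comap (W k) inferInstance) ⊔
        (⨆ k ∈ range (n + 1), MeasurableSpace.comap (D k) inferInstance)] B →
      μ' (B ∩ W n ⁻¹' A)
        = ∫⁻ ω in B,
            (if D n ω = 0 then u0 A else κ (W (D n ω - 1) ω) A) ∂μ') :
    μ.map (fun ω (k : ℕ) => Z k ω) = μ'.map (fun ω (k : ℕ) => W k ω) := by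
  classical
  have hvecZ : ∀ n : ℕ, Measurable (fun ω (k : Fin n) => Z k ω) :=
    fun n => measurable_pi_lambda _ fun k => hZmeas k
  have hvecW : ∀ n : ℕ, Measurable (fun ω (k : Fin n) => W k ω) :=
    fun n => measurable_pi_lambda _ fun k => hWmeas k
  -- the urn composition
  have hUval : ∀ (n : ℕ) (ω : Ω) (A : Set S),
      U n ω A = u0 A + ∑ k ∈ range n, κ (Z k ω) A := by
    intro n
    induction n with
    | zero => intro ω A; simp [hU0 ω]
    | succ m ih =>
        intro ω A
        rw [hUrec m ω, Measure.add_apply, ih ω A, Finset.sum_range_succ, add_assoc]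
  -- one over n+1
  have hc : ∀ n : ℕ, ENNReal.ofReal (1 / (n + 1 : ℝ)) = ((n : ℝ≥0∞) + 1)⁻¹ := by
    intro n
    rw [one_div, ENNReal.ofReal_inv_of_pos (by positivity),
      ENNReal.ofReal_add (by positivity) zero_le_one, ENNReal.ofReal_natCast,
      ENNReal.ofReal_one]
  -- main finite-dimensional claim
  have key : ∀ n : ℕ,
      μ.map (fun ω (k : Fin n) => Z k ω) = μ'.map (fun ω (k : Fin n) => W k ω) := by
    intro n
    induction n with
    | zero =>
        haveI := Measure.isProbabilityMeasure_map (μ := μ) (hvecZ 0).aemeasurable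
        haveI := Measure.isProbabilityMeasure_map (μ := μ') (hvecW 0).aemeasurable
        ext s hs
        rcases s.eq_empty_or_nonempty with rfl | ⟨x, hx⟩
        · simp
        · have hsu : s = Set.univ := by
            apply Set.eq_univ_of_forall
            intro y
            rwa [Subsingleton.elim y x]
          rw [hsu]
          simp [measure_univ]
    | succ n ih =>
        -- rectangle identity at level n+1
        have rect : ∀ A : ℕ → Set S, (∀ k, MeasurableSet (A k)) →
            μ (⋂ k ∈ range (n + 1), Z k ⁻¹' A k)
              = μ' (⋂ k ∈ range (n + 1), W k ⁻¹' A k) := by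
          intro A hA
          set Bz : Set Ω := ⋂ k ∈ range n, Z k ⁻¹' A k with hBzdef
          set Bw : Set Ω' := ⋂ k ∈ range n, W k ⁻¹' A k with hBwdef
          have hBzm : MeasurableSet Bz :=
            MeasurableSet.biInter (range n).countable_toSet
              fun k _ => (hZmeas k) (hA k)
          have hBwm : MeasurableSet Bw :=
            MeasurableSet.biInter (range n).countable_toSet
              fun k _ => (hWmeas k) (hA k)
          have hBzs : MeasurableSet[⨆ k ∈ range n,
              MeasurableSpace.comap (Z k) inferInstance] Bz :=
            MeasurableSet.biInter (range n).countable_toSet fun k hk =>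
              (le_iSup₂ (f := fun (k : ℕ) (_ : k ∈ range n) =>
                MeasurableSpace.comap (Z k) inferInstance) k hk)
                (Z k ⁻¹' A k) ⟨A k, hA k, rfl⟩
          have hBws : MeasurableSet[⨆ k ∈ range n,
              MeasurableSpace.comap (W k) inferInstance] Bw :=
            MeasurableSet.biInter (range n).countable_toSet fun k hk =>
              (le_iSup₂ (f := fun (k : ℕ) (_ : k ∈ range n) =>
                MeasurableSpace.comap (W k) inferInstance) k hk)
                (W k ⁻¹' A k) ⟨A k, hA k, rfl⟩
          have hRect : MeasurableSet (Set.univ.pi fun i : Fin n => A i) :=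
            MeasurableSet.univ_pi fun i => hA i
          have hBz_eq : Bz = (fun ω (k : Fin n) => Z k ω) ⁻¹'
              (Set.univ.pi fun i : Fin n => A i) := by
            ext ω
            simp only [hBzdef, Set.mem_iInter, Set.mem_preimage, Set.mem_pi,
              Set.mem_univ, forall_true_left, Finset.mem_range]
            constructor
            · intro h i; exact h i i.isLt
            · intro h k hk; exact h ⟨k, hk⟩
          have hBw_eq : Bw = (fun ω (k : Fin n) => W k ω) ⁻¹'
              (Set.univ.pi fun i : Fin n => A i) := by
            ext ω
            simp only [hBwdef, Set.mem_iInter, Set.mem_preimage, Set.mem_pi,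
              Set.mem_univ, forall_true_left, Finset.mem_range]
            constructor
            · intro h i; exact h i i.isLt
            · intro h k hk; exact h ⟨k, hk⟩
          have hmeasB : μ Bz = μ' Bw := by
            rw [hBz_eq, hBw_eq, ← Measure.map_apply (hvecZ n) hRect,
              ← Measure.map_apply (hvecW n) hRect, ih]
          have hI : ∀ k ∈ range n,
              ∫⁻ ω in Bz, κ (Z k ω) (A n) ∂μ
                = ∫⁻ ω in Bw, κ (W k ω) (A n) ∂μ' := by
            intro k hk
            have hkn : k < n := mem_range.mp hk
            set F : (Fin n → S) → ℝ≥0∞ :=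
              (Set.univ.pi fun i : Fin n => A i).indicator
                (fun x => κ (x ⟨k, hkn⟩) (A n)) with hF
            have hFm : Measurable F :=
              ((κ.measurable_coe (hA n)).comp (measurable_pi_apply _)).indicator hRect
            have hz : ∫⁻ ω in Bz, κ (Z k ω) (A n) ∂μ
                = ∫⁻ x, F x ∂(μ.map (fun ω (j : Fin n) => Z j ω)) := by
              rw [lintegral_map hFm (hvecZ n), ← lintegral_indicator hBzm]
              refine lintegral_congr fun ω => ?_
              rw [hBz_eq]
              by_cases hω : (fun j : Fin n => Z j ω) ∈
                  Set.univ.pi fun i : Fin n => A i <;>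
                simp [hF, Set.indicator_apply, hω]
            have hw : ∫⁻ ω in Bw, κ (W k ω) (A n) ∂μ'
                = ∫⁻ x, F x ∂(μ'.map (fun ω (j : Fin n) => W j ω)) := by
              rw [lintegral_map hFm (hvecW n), ← lintegral_indicator hBwm]
              refine lintegral_congr fun ω => ?_
              rw [hBw_eq]
              by_cases hω : (fun j : Fin n => W j ω) ∈
                  Set.univ.pi fun i : Fin n => A i <;>
                simp [hF, Set.indicator_apply, hω]
            rw [hz, hw, ih]
          -- the Z side
          have hsplitZ : (⋂ k ∈ range (n + 1), Z k ⁻¹' A k) = Bz ∩ Z n ⁻¹' A n := by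
            rw [Finset.range_add_one, Finset.set_biInter_insert, Set.inter_comm]
          have hsplitW : (⋂ k ∈ range (n + 1), W k ⁻¹' A k) = Bw ∩ W n ⁻¹' A n := by
            rw [Finset.range_add_one, Finset.set_biInter_insert, Set.inter_comm]
          have hfm : Measurable fun ω =>
              u0 (A n) + ∑ k ∈ range n, κ (Z k ω) (A n) :=
            measurable_const.add (Finset.measurable_sum _ fun k _ =>
              (κ.measurable_coe (hA n)).comp (hZmeas k))
          have hzside : μ (⋂ k ∈ range (n + 1), Z k ⁻¹' A k)
              = ((n : ℝ≥0∞) + 1)⁻¹ *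
                (u0 (A n) * μ Bz + ∑ k ∈ range n, ∫⁻ ω in Bz, κ (Z k ω) (A n) ∂μ) := by
            rw [hsplitZ, hdraw n (A n) (hA n) Bz hBzs]
            calc ∫⁻ ω in Bz, U n ω (A n) / ((n : ℝ≥0∞) + 1) ∂μ
                = ∫⁻ ω in Bz, (u0 (A n) + ∑ k ∈ range n, κ (Z k ω) (A n))
                    * ((n : ℝ≥0∞) + 1)⁻¹ ∂μ := by
                  refine lintegral_congr fun ω => ?_
                  rw [hUval n ω (A n), div_eq_mul_inv]
              _ = (∫⁻ ω in Bz, (u0 (A n) + ∑ k ∈ range n, κ (Z k ω) (A n)) ∂μ)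
                    * ((n : ℝ≥0∞) + 1)⁻¹ := lintegral_mul_const _ hfm
              _ = (u0 (A n) * μ Bz
                    + ∑ k ∈ range n, ∫⁻ ω in Bz, κ (Z k ω) (A n) ∂μ)
                    * ((n : ℝ≥0∞) + 1)⁻¹ := by
                  rw [lintegral_add_left measurable_const, setLIntegral_const,
                    lintegral_finset_sum (μ := μ.restrict Bz) (range n)
                      (f := fun k ω => κ (Z k ω) (A n)) (fun k _ =>
                      (κ.measurable_coe (hA n)).comp (hZmeas k))]
              _ = ((n : ℝ≥0∞) + 1)⁻¹ *
                    (u0 (A n) * μ Bz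
                      + ∑ k ∈ range n, ∫⁻ ω in Bz, κ (Z k ω) (A n) ∂μ) := mul_comm _ _
          -- the W side
          have hjoin_le : ((⨆ k ∈ range n, MeasurableSpace.comap (W k) inferInstance) ⊔
              (⨆ k ∈ range n, MeasurableSpace.comap (D k) inferInstance)) ≤
                (inferInstance : MeasurableSpace Ω') :=
            sup_le (iSup₂_le fun k _ => measurable_iff_comap_le.mp (hWmeas k))
              (iSup₂_le fun k _ => measurable_iff_comap_le.mp (hDmeas k))
          have hBw_join : MeasurableSet[(⨆ k ∈ range n,
              MeasurableSpace.comap (W k) inferInstance) ⊔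
              (⨆ k ∈ range n, MeasurableSpace.comap (D k) inferInstance)] Bw :=
            le_sup_left (α := MeasurableSpace Ω') _ hBws
          have hwside : μ' (⋂ k ∈ range (n + 1), W k ⁻¹' A k)
              = ((n : ℝ≥0∞) + 1)⁻¹ *
                (u0 (A n) * μ' Bw + ∑ k ∈ range n, ∫⁻ ω in Bw, κ (W k ω) (A n) ∂μ') := by
            have hBw_join' : MeasurableSet[(⨆ k ∈ range n,
                MeasurableSpace.comap (W k) inferInstance) ⊔
                (⨆ k ∈ range (n + 1), MeasurableSpace.comap (D k) inferInstance)] Bw :=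
              le_sup_left (α := MeasurableSpace Ω') _ hBws
            rw [hsplitW, hWdraw n (A n) (hA n) Bw hBw_join']
            have hDset : ∀ j : ℕ, MeasurableSet (D n ⁻¹' {j}) :=
              fun j => hDmeas n (measurableSet_singleton j)
            have hcover : Bw = ⋃ j : ℕ, (Bw ∩ D n ⁻¹' {j}) := by
              ext ω; simp
            have hdisj : Pairwise (Function.onFun Disjoint
                fun j : ℕ => Bw ∩ D n ⁻¹' {j}) := by
              intro i j hij
              refine Set.disjoint_left.mpr fun ω hωi hωj => hij ?_
              have h1 : D n ω = i := hωi.2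
              have h2 : D n ω = j := hωj.2
              rw [← h1, h2]
            have hsum : ∫⁻ ω in Bw,
                (if D n ω = 0 then u0 (A n) else κ (W (D n ω - 1) ω) (A n)) ∂μ'
                = ∑' j : ℕ, ∫⁻ ω in Bw ∩ D n ⁻¹' {j},
                    (if D n ω = 0 then u0 (A n) else κ (W (D n ω - 1) ω) (A n)) ∂μ' := by
              conv_lhs => rw [hcover]
              exact lintegral_iUnion (fun j => hBwm.inter (hDset j)) hdisj _
            have hvanish : ∀ j ∉ range (n + 1),
                ∫⁻ ω in Bw ∩ D n ⁻¹' {j},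
                  (if D n ω = 0 then u0 (A n) else κ (W (D n ω - 1) ω) (A n)) ∂μ' = 0 := by
              intro j hj
              have hjn : n < j := by
                by_contra h
                exact hj (mem_range.mpr (Nat.lt_succ_of_le (not_lt.mp h)))
              have : Bw ∩ D n ⁻¹' {j} = ∅ := by
                ext ω
                simp only [Set.mem_inter_iff, Set.mem_preimage, Set.mem_singleton_iff,
                  Set.mem_empty_iff_false, iff_false, not_and]
                intro _ hD
                exact absurd (hD ▸ hDrange n ω) (not_le.mpr hjn)
              rw [this, Measure.restrict_empty, lintegral_zero_measure]
            have hμDj : ∀ j : ℕ, j ≤ n → μ' (D n ⁻¹' {j})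
                = ENNReal.ofReal (1 / (n + 1 : ℝ)) := by
              intro j hj
              have hset : D n ⁻¹' {j} = {ω | D n ω = j} := by ext ω; simp
              rw [hset]
              exact hDunif n j hj
            have hterm : ∀ j ∈ range (n + 1),
                ∫⁻ ω in Bw ∩ D n ⁻¹' {j},
                  (if D n ω = 0 then u0 (A n) else κ (W (D n ω - 1) ω) (A n)) ∂μ'
                = ((n : ℝ≥0∞) + 1)⁻¹ * (if j = 0 then u0 (A n) * μ' Bw
                    else ∫⁻ ω in Bw, κ (W (j - 1) ω) (A n) ∂μ') := by
              intro j hj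
              have hjle : j ≤ n := Nat.lt_succ_iff.mp (mem_range.mp hj)
              have hcongr : ∫⁻ ω in Bw ∩ D n ⁻¹' {j},
                  (if D n ω = 0 then u0 (A n) else κ (W (D n ω - 1) ω) (A n)) ∂μ'
                  = ∫⁻ ω in Bw ∩ D n ⁻¹' {j},
                    (if j = 0 then u0 (A n) else κ (W (j - 1) ω) (A n)) ∂μ' := by
                refine lintegral_congr_ae ?_
                filter_upwards [ae_restrict_mem (hBwm.inter (hDset j))] with ω hω
                have hDω : D n ω = j := hω.2
                rw [hDω]
              rw [hcongr]
              have ht : MeasurableSet[MeasurableSpace.comap (D n) inferInstance]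
                  (D n ⁻¹' {j}) := ⟨{j}, measurableSet_singleton j, rfl⟩
              by_cases hj0 : j = 0
              · subst hj0
                simp only [↓reduceIte]
                rw [grt_indep_setLIntegral (measurable_iff_comap_le.mp (hDmeas n))
                    hjoin_le (hDindep n) ht hBw_join measurable_const,
                  setLIntegral_const, hμDj 0 (Nat.zero_le n), hc n]
              · obtain ⟨i, rfl⟩ : ∃ i, j = i + 1 :=
                  ⟨j - 1, (Nat.succ_pred_eq_of_pos (Nat.pos_of_ne_zero hj0)).symm⟩
                simp only [show ¬(i + 1 = 0) from by omega, if_false, Nat.add_sub_cancel]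
                have hin : i < n := by omega
                have hWi : Measurable[(⨆ k ∈ range n,
                    MeasurableSpace.comap (W k) inferInstance) ⊔
                    (⨆ k ∈ range n, MeasurableSpace.comap (D k) inferInstance)] (W i) :=
                  measurable_iff_comap_le.mpr
                    (le_trans (le_iSup₂ (f := fun (k : ℕ) (_ : k ∈ range n) =>
                      MeasurableSpace.comap (W k) inferInstance) i (mem_range.mpr hin))
                      le_sup_left)
                have hfW : Measurable[(⨆ k ∈ range n,
                    MeasurableSpace.comap (W k) inferInstance) ⊔
                    (⨆ k ∈ range n, MeasurableSpace.comap (D k) inferInstance)]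
                    (fun ω => κ (W i ω) (A n)) :=
                  (κ.measurable_coe (hA n)).comp hWi
                rw [grt_indep_setLIntegral (measurable_iff_comap_le.mp (hDmeas n))
                    hjoin_le (hDindep n) ht hBw_join hfW,
                  hμDj (i + 1) (Nat.succ_le_of_lt hin), hc n]
            rw [hsum, tsum_eq_sum hvanish, Finset.sum_congr rfl hterm,
              Finset.sum_range_succ']
            simp only [Nat.add_one_ne_zero, if_false, ↓reduceIte, Nat.add_sub_cancel]
            rw [← Finset.mul_sum]
            ring
          rw [hzside, hwside, hmeasB, Finset.sum_congr rfl hI]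
        -- extend to the product σ-algebra on Fin (n+1) → S
        haveI := Measure.isProbabilityMeasure_map (μ := μ) (hvecZ (n + 1)).aemeasurable
        haveI := Measure.isProbabilityMeasure_map (μ := μ') (hvecW (n + 1)).aemeasurable
        refine ext_of_generate_finite _ generateFrom_pi.symm isPiSystem_pi ?_ ?_
        · rintro s ⟨t, ht, rfl⟩
          have htm : ∀ i : Fin (n + 1), MeasurableSet (t i) :=
            fun i => ht i (Set.mem_univ i)
          set A : ℕ → Set S := fun k => if h : k < n + 1 then t ⟨k, h⟩ else Set.univ
            with hAdef
          have hA : ∀ k, MeasurableSet (A k) := by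
            intro k
            by_cases h : k ≤ n <;> simp [hAdef, h, htm]
          have hpreZ : (fun ω (k : Fin (n + 1)) => Z k ω) ⁻¹' Set.univ.pi t
              = ⋂ k ∈ range (n + 1), Z k ⁻¹' A k := by
            ext ω
            simp only [Set.mem_preimage, Set.mem_pi, Set.mem_univ, forall_true_left,
              Set.mem_iInter, Finset.mem_range]
            constructor
            · intro h k hk
              simpa [hAdef, dif_pos hk, Nat.lt_add_one_iff.mp hk] using h ⟨k, hk⟩
            · intro h i
              have := h i i.isLt
              simpa [hAdef, dif_pos i.isLt, Nat.lt_add_one_iff.mp i.isLt] using this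
          have hpreW : (fun ω (k : Fin (n + 1)) => W k ω) ⁻¹' Set.univ.pi t
              = ⋂ k ∈ range (n + 1), W k ⁻¹' A k := by
            ext ω
            simp only [Set.mem_preimage, Set.mem_pi, Set.mem_univ, forall_true_left,
              Set.mem_iInter, Finset.mem_range]
            constructor
            · intro h k hk
              simpa [hAdef, dif_pos hk, Nat.lt_add_one_iff.mp hk] using h ⟨k, hk⟩
            · intro h i
              have := h i i.isLt
              simpa [hAdef, dif_pos i.isLt, Nat.lt_add_one_iff.mp i.isLt] using this
          rw [Measure.map_apply (hvecZ (n + 1)) (MeasurableSet.univ_pi htm),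
            Measure.map_apply (hvecW (n + 1)) (MeasurableSet.univ_pi htm),
            hpreZ, hpreW]
          exact rect A hA
        · simp [measure_univ]
  -- conclude on the full sequence space
  have hFZ : Measurable (fun ω (k : ℕ) => Z k ω) :=
    measurable_pi_lambda _ fun k => hZmeas k
  have hFW : Measurable (fun ω (k : ℕ) => W k ω) :=
    measurable_pi_lambda _ fun k => hWmeas k
  haveI := Measure.isProbabilityMeasure_map (μ := μ) hFZ.aemeasurable
  haveI := Measure.isProbabilityMeasure_map (μ := μ') hFW.aemeasurable
  refine ext_of_generate_finite _ generateFrom_measurableCylinders.symm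
    isPiSystem_measurableCylinders ?_ (by simp [measure_univ])
  intro s hs
  obtain ⟨I, T, hT, rfl⟩ := (mem_measurableCylinders s).mp hs
  set n : ℕ := I.sup id + 1 with hn
  have hIlt : ∀ i ∈ I, i < n := fun i hi =>
    Nat.lt_succ_of_le (Finset.le_sup (f := id) hi)
  set r : (Fin n → S) → (∀ i : I, S) := fun x i => x ⟨i.1, hIlt i.1 i.2⟩ with hr
  have hrm : Measurable r := measurable_pi_lambda _ fun i => measurable_pi_apply _
  have hZcyl : (fun ω (k : ℕ) => Z k ω) ⁻¹' cylinder I T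
      = (fun ω (k : Fin n) => Z k ω) ⁻¹' (r ⁻¹' T) := rfl
  have hWcyl : (fun ω (k : ℕ) => W k ω) ⁻¹' cylinder I T
      = (fun ω (k : Fin n) => W k ω) ⁻¹' (r ⁻¹' T) := rfl
  rw [Measure.map_apply hFZ hT.cylinder, Measure.map_apply hFW hT.cylinder,
    hZcyl, hWcyl, ← Measure.map_apply (hvecZ n) (hrm hT),
    ← Measure.map_apply (hvecW n) (hrm hT), key n]
end
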